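/- Let H be a connected graph which contains a cycle and which is not isomorphic to K₃. Then m₂(H) < Δ(H), where Δ(H) denotes the maximum degree of H. -/

import Mathlib

open MeasureTheory Filter

/-- The Bernoulli measure on `Bool` with success probability `p` (clamped to `[0,1]`). -/
noncomputable def bernoulliMeasure (p : ℝ) : Measure Bool :=
  (PMF.bernoulli (min 1 (Real.toNNReal p)) (min_le_left _ _)).toMeasure

/-- The product measure modelling the binomial random graph `G(n,p)`:
each potential edge slot (an element of `Sym2 (Fin n)`) carries an independent
Bernoulli(p) indicator. -/
noncomputable def gnp (n : ℕ) (p : ℝ) : Measure (Sym2 (Fin n) → Bool) :=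
  Measure.pi fun _ => bernoulliMeasure p

/-- The simple graph determined by an outcome of the edge indicators. -/
def graphOf {n : ℕ} (ω : Sym2 (Fin n) → Bool) : SimpleGraph (Fin n) :=
  SimpleGraph.fromEdgeSet {e | ω e = true}

/-- The 2-density `m₂(H)`: the maximum of `(e(H') - 1)/(v(H') - 2)` over all
subgraphs `H'` of `H` with at least 3 vertices. -/
noncomputable def m2 {β : Type*} (H : SimpleGraph β) : ℝ :=
  sSup {x | ∃ H' : H.Subgraph, 3 ≤ H'.verts.ncard ∧
    x = ((H'.edgeSet.ncard : ℝ) - 1) / ((H'.verts.ncard : ℝ) - 2)}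

/-- The chromatic number of `H` as a natural number. -/
noncomputable def chi {β : Type*} (H : SimpleGraph β) : ℕ := H.chromaticNumber.toNat

/-- `σ(H)`: the minimum size of the smallest colour class over all proper
colourings of `H` with `χ(H)` colours. -/
noncomputable def sigmaH {β : Type*} (H : SimpleGraph β) : ℕ :=
  sInf {s | ∃ C : H.Coloring (Fin (chi H)), ∃ i : Fin (chi H), s = Nat.card {v // C v = i}}

/-- The critical chromatic threshold `χ_cr(H) = (χ(H)-1)·v(H)/(v(H)-σ(H))`. -/
noncomputable def chiCr {β : Type*} [Fintype β] (H : SimpleGraph β) : ℝ :=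
  ((chi H : ℝ) - 1) * (Fintype.card β : ℝ) / ((Fintype.card β : ℝ) - (sigmaH H : ℝ))

/-- `f` is a copy of `H` in `G`, i.e. an embedding of the vertex set of `H`
into `G` mapping edges of `H` to edges of `G`. -/
def IsCopy {α β : Type*} (H : SimpleGraph β) (G : SimpleGraph α) (f : β → α) : Prop :=
  Function.Injective f ∧ ∀ u v : β, H.Adj u v → G.Adj (f u) (f v)

/-- `G` contains an `H`-packing (a family of pairwise vertex-disjoint copies of `H`)
covering all but at most `k` vertices of `G`. -/
def HasPackingCovering {α β : Type*} [Fintype β] (H : SimpleGraph β) (G : SimpleGraph α)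
    (k : ℝ) : Prop :=
  ∃ (m : ℕ) (f : Fin m → β → α),
    (∀ j, IsCopy H G (f j)) ∧
    (∀ j j', j ≠ j' → Disjoint (Set.range (f j)) (Set.range (f j'))) ∧
    ((Nat.card α : ℝ) ≤ (m : ℝ) * (Fintype.card β : ℝ) + k)

/-- The maximum degree of a graph. -/
noncomputable def maxDeg {β : Type*} (H : SimpleGraph β) : ℕ :=
  sSup {d : ℕ | ∃ v : β, d = (H.neighborSet v).ncard}


lemma firstEdge_mem {β : Type} {H : SimpleGraph β} {a b : β} (p : H.Walk a b) (hp : ¬ p.Nil) :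
    s(a, p.getVert 1) ∈ p.edges := by
  cases p with
  | nil => simp at hp
  | cons h q => simp [SimpleGraph.Walk.getVert_cons_succ, SimpleGraph.Walk.getVert_zero]

lemma exists_two_neighbors {β : Type} {H : SimpleGraph β} (hcyc : ¬ H.IsAcyclic) :
    ∃ v u w : β, u ≠ w ∧ H.Adj v u ∧ H.Adj v w := by
  simp only [SimpleGraph.IsAcyclic, not_forall, not_not] at hcyc
  obtain ⟨v, c, hc⟩ := hcyc
  cases c with
  | nil => exact (hc.ne_nil rfl).elim
  | @cons _ u _ h q =>
    rw [SimpleGraph.Walk.cons_isCycle_iff] at hc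
    obtain ⟨hq, he⟩ := hc
    have hqnil : ¬ q.Nil := SimpleGraph.Walk.not_nil_of_ne h.ne'
    have hrnil : ¬ q.reverse.Nil := by
      rwa [SimpleGraph.Walk.nil_iff_length_eq, SimpleGraph.Walk.length_reverse,
        ← SimpleGraph.Walk.nil_iff_length_eq]
    have hadj : H.Adj v (q.reverse.getVert 1) := q.reverse.adj_snd hrnil
    have hmem : s(v, q.reverse.getVert 1) ∈ q.edges := by
      have := firstEdge_mem q.reverse hrnil
      rwa [SimpleGraph.Walk.edges_reverse, List.mem_reverse] at this
    refine ⟨v, u, q.reverse.getVert 1, ?_, h, hadj⟩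
    intro h'
    rw [← h'] at hmem
    exact he hmem

lemma ncard_le_maxDeg {β : Type} [Fintype β] (H : SimpleGraph β) (v : β) :
    (H.neighborSet v).ncard ≤ maxDeg H := by
  apply le_csSup
  · refine ⟨Fintype.card β, fun d hd => ?_⟩
    obtain ⟨w, rfl⟩ := hd
    calc (H.neighborSet w).ncard ≤ (Set.univ : Set β).ncard :=
          Set.ncard_le_ncard (Set.subset_univ _) Set.finite_univ
      _ = Fintype.card β := by simp [Set.ncard_univ, Nat.card_eq_fintype_card]
  · exact ⟨v, rfl⟩

lemma degH_eq {β : Type} [Fintype β] (H : SimpleGraph β) [DecidableRel H.Adj] (v : β) :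
    H.degree v = (H.neighborSet v).ncard := by
  rw [← SimpleGraph.card_neighborSet_eq_degree, ← Nat.card_coe_set_eq,
    Nat.card_eq_fintype_card]

lemma subgraph_count {β : Type} [Fintype β] {H : SimpleGraph β} (H' : H.Subgraph) :
    2 * H'.edgeSet.ncard ≤ H'.verts.ncard * maxDeg H := by
  classical
  haveI : Fintype H'.verts := Fintype.ofFinite _
  have he : H'.edgeSet.ncard = H'.coe.edgeFinset.card := by
    rw [← SimpleGraph.Subgraph.image_coe_edgeSet_coe,
      Set.ncard_image_of_injective _ (Sym2.map.injective Subtype.val_injective),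
      ← Nat.card_coe_set_eq, Nat.card_eq_fintype_card, SimpleGraph.edgeFinset_card]
  have hv : H'.verts.ncard = Fintype.card H'.verts := by
    rw [← Nat.card_coe_set_eq, Nat.card_eq_fintype_card]
  have hdeg : ∀ x : H'.verts, H'.coe.degree x ≤ maxDeg H := by
    intro x
    calc H'.coe.degree x = H'.degree (x : β) := SimpleGraph.Subgraph.coe_degree _ _
      _ ≤ H.degree (x : β) := SimpleGraph.Subgraph.degree_le _ _
      _ = (H.neighborSet (x : β)).ncard := degH_eq H _
      _ ≤ maxDeg H := ncard_le_maxDeg H _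
  have hsum := H'.coe.sum_degrees_eq_twice_card_edges
  have hb : ∑ x : H'.verts, H'.coe.degree x ≤ (Fintype.card H'.verts) * maxDeg H := by
    calc ∑ x : H'.verts, H'.coe.degree x ≤ (Finset.univ.card) • maxDeg H :=
          Finset.sum_le_card_nsmul _ _ _ (fun x _ => hdeg x)
      _ = (Fintype.card H'.verts) * maxDeg H := by
          rw [Finset.card_univ, smul_eq_mul]
  rw [he, hv, ← hsum]
  refine le_trans (le_of_eq (Finset.sum_congr rfl fun x _ => ?_)) hb
  congr!

lemma three_le_ncard {β : Type} [Fintype β] {s : Set β} {p q r : β} (hp : p ∈ s) (hq : q ∈ s) (hr : r ∈ s)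
    (hpq : p ≠ q) (hpr : p ≠ r) (hqr : q ≠ r) : 3 ≤ s.ncard := by
  have h3 : ({p, q, r} : Set β).ncard = 3 :=
    Set.ncard_eq_three.mpr ⟨p, q, r, hpq, hpr, hqr, rfl⟩
  calc 3 = ({p, q, r} : Set β).ncard := h3.symm
    _ ≤ s.ncard := Set.ncard_le_ncard (by
        intro x hx
        rcases hx with rfl | rfl | rfl <;> assumption) (Set.toFinite s)

lemma triangle_deg {β : Type} [Fintype β] {H : SimpleGraph β} (hconn : H.Connected)
    (hK3 : ¬ Nonempty (H ≃g (⊤ : SimpleGraph (Fin 3))))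
    {a b c : β} (hab : H.Adj a b) (hac : H.Adj a c) (hbc : H.Adj b c) :
    3 ≤ maxDeg H := by
  classical
  by_cases hall : ∀ x : β, x = a ∨ x = b ∨ x = c
  · exfalso
    apply hK3
    have huniv : (Finset.univ : Finset β) = {a, b, c} := by
      ext x; simpa using hall x
    have hcard : Fintype.card β = 3 := by
      rw [← Finset.card_univ, huniv]
      exact Finset.card_eq_three.mpr ⟨a, b, c, hab.ne, hac.ne, hbc.ne, rfl⟩
    have hadj : ∀ u w : β, u ≠ w → H.Adj u w := by
      intro u w huw
      rcases hall u with rfl | rfl | rfl <;> rcases hall w with rfl | rfl | rfl <;>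
        first
          | exact (huw rfl).elim
          | assumption
          | exact hab.symm
          | exact hac.symm
          | exact hbc.symm
    have e := Fintype.equivFinOfCardEq hcard
    exact ⟨{ toEquiv := e,
             map_rel_iff' := by
               intro u w
               simp only [SimpleGraph.top_adj, ne_eq, EmbeddingLike.apply_eq_iff_eq]
               exact ⟨fun h => hadj u w h, fun h => h.ne⟩ }⟩
  · push_neg at hall
    obtain ⟨d, hda, hdb, hdc⟩ := hall
    obtain ⟨p⟩ := hconn.preconnected a d
    obtain ⟨dart, _, hfst, hsnd⟩ := p.exists_boundary_dart {a, b, c} (by simp) (by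
      simp only [Set.mem_insert_iff, Set.mem_singleton_iff]
      tauto)
    have hadj := dart.adj
    have hy1 : dart.toProd.2 ≠ a := fun h => hsnd (by simp [h])
    have hy2 : dart.toProd.2 ≠ b := fun h => hsnd (by simp [h])
    have hy3 : dart.toProd.2 ≠ c := fun h => hsnd (by simp [h])
    have key : ∃ v : β, 3 ≤ (H.neighborSet v).ncard := by
      rcases hfst with h | h | h
      · refine ⟨a, three_le_ncard (p := b) (q := c) (r := dart.toProd.2) hab hac ?_ hbc.ne hy2.symm hy3.symm⟩
        rwa [← h]
      · refine ⟨b, three_le_ncard (p := a) (q := c) (r := dart.toProd.2) hab.symm hbc ?_ hac.ne hy1.symm hy3.symm⟩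
        rwa [← h]
      · refine ⟨c, three_le_ncard (p := a) (q := b) (r := dart.toProd.2) hac.symm hbc.symm ?_ hab.ne hy1.symm hy2.symm⟩
        rwa [← h]
    obtain ⟨v, hv⟩ := key
    exact hv.trans (ncard_le_maxDeg H v)

lemma subgraph_edge_le {β : Type} [Fintype β] {H : SimpleGraph β} (H' : H.Subgraph) :
    H'.edgeSet.ncard ≤ (H'.verts.ncard).choose 2 := by
  classical
  haveI : Fintype H'.verts := Fintype.ofFinite _
  haveI : DecidableRel H'.coe.Adj := Classical.decRel _
  have he : H'.edgeSet.ncard = H'.coe.edgeFinset.card := by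
    rw [← SimpleGraph.Subgraph.image_coe_edgeSet_coe,
      Set.ncard_image_of_injective _ (Sym2.map.injective Subtype.val_injective),
      ← Nat.card_coe_set_eq, Nat.card_eq_fintype_card, SimpleGraph.edgeFinset_card]
  have hv : H'.verts.ncard = Fintype.card H'.verts := by
    rw [← Nat.card_coe_set_eq, Nat.card_eq_fintype_card]
  rw [he, hv]
  exact SimpleGraph.card_edgeFinset_le_card_choose_two

lemma triangle_of {β : Type} [Fintype β] {H : SimpleGraph β} (H' : H.Subgraph)
    (hv : H'.verts.ncard = 3) (hge : 3 ≤ H'.edgeSet.ncard) :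
    ∃ a b c : β, H.Adj a b ∧ H.Adj a c ∧ H.Adj b c := by
  obtain ⟨a, b, c, hab, hac, hbc, hset⟩ := Set.ncard_eq_three.mp hv
  have hsub : H'.edgeSet ⊆ ({s(a, b), s(a, c), s(b, c)} : Set (Sym2 β)) := by
    intro e he'
    induction e using Sym2.ind with
    | _ x y =>
      rw [SimpleGraph.Subgraph.mem_edgeSet] at he'
      have hx : x ∈ ({a, b, c} : Set β) := hset ▸ H'.edge_vert he'
      have hy : y ∈ ({a, b, c} : Set β) := hset ▸ H'.edge_vert he'.symm
      have hxy : x ≠ y := (H'.adj_sub he').ne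
      simp only [Set.mem_insert_iff, Set.mem_singleton_iff] at hx hy ⊢
      rcases hx with rfl | rfl | rfl <;> rcases hy with rfl | rfl | rfl <;>
        simp_all [Sym2.eq_iff]
  have hle : ({s(a, b), s(a, c), s(b, c)} : Set (Sym2 β)).ncard ≤ H'.edgeSet.ncard := by
    calc ({s(a, b), s(a, c), s(b, c)} : Set (Sym2 β)).ncard
        ≤ ({s(a, c), s(b, c)} : Set (Sym2 β)).ncard + 1 := Set.ncard_insert_le _ _
      _ ≤ (({s(b, c)} : Set (Sym2 β)).ncard + 1) + 1 := by
          exact Nat.add_le_add_right (Set.ncard_insert_le _ _) 1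
      _ = 3 := by rw [Set.ncard_singleton]
      _ ≤ H'.edgeSet.ncard := hge
  have heq := Set.eq_of_subset_of_ncard_le hsub hle
    (Set.Finite.insert _ (Set.Finite.insert _ (Set.finite_singleton _)))
  have h1 : H'.Adj a b := SimpleGraph.Subgraph.mem_edgeSet.mp (heq ▸ (by simp : s(a,b) ∈ ({s(a, b), s(a, c), s(b, c)} : Set (Sym2 β))))
  have h2 : H'.Adj a c := SimpleGraph.Subgraph.mem_edgeSet.mp (heq ▸ (by simp : s(a,c) ∈ ({s(a, b), s(a, c), s(b, c)} : Set (Sym2 β))))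
  have h3 : H'.Adj b c := SimpleGraph.Subgraph.mem_edgeSet.mp (heq ▸ (by simp : s(b,c) ∈ ({s(a, b), s(a, c), s(b, c)} : Set (Sym2 β))))
  exact ⟨a, b, c, H'.adj_sub h1, H'.adj_sub h2, H'.adj_sub h3⟩

/-- For every connected graph `H` which contains a cycle and is not isomorphic to `K₃`,
we have `m₂(H) < Δ(H)`. -/
theorem statement_12 {β : Type} [Fintype β] (H : SimpleGraph β) (hconn : H.Connected)
    (hcyc : ¬ H.IsAcyclic) (hK3 : ¬ Nonempty (H ≃g (⊤ : SimpleGraph (Fin 3)))) :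
    m2 H < (maxDeg H : ℝ) := by
  classical
  obtain ⟨v0, u0, w0, huw, hadj1, hadj2⟩ := exists_two_neighbors hcyc
  have hΔ2 : 2 ≤ maxDeg H := by
    refine le_trans ?_ (ncard_le_maxDeg H v0)
    have h2 : ({u0, w0} : Set β).ncard = 2 := Set.ncard_pair huw
    rw [← h2]
    refine Set.ncard_le_ncard ?_ (Set.toFinite _)
    rintro x (rfl | rfl)
    exacts [hadj1, hadj2]
  have hcard3 : 3 ≤ Fintype.card β := by
    have h := three_le_ncard (s := (Set.univ : Set β)) (p := u0) (q := v0) (r := w0)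
      trivial trivial trivial hadj1.ne' huw hadj2.ne
    rwa [Set.ncard_univ, Nat.card_eq_fintype_card] at h
  have hbound : ∀ x ∈ {x | ∃ H' : H.Subgraph, 3 ≤ H'.verts.ncard ∧
      x = ((H'.edgeSet.ncard : ℝ) - 1) / ((H'.verts.ncard : ℝ) - 2)},
      x ≤ (maxDeg H : ℝ) - 1/2 := by
    rintro x ⟨H', hv3, rfl⟩
    have hden : (0:ℝ) < (H'.verts.ncard : ℝ) - 2 := by
      have h3 : (3:ℝ) ≤ (H'.verts.ncard : ℝ) := by exact_mod_cast hv3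
      linarith
    rw [div_le_iff₀ hden]
    have hΔ : (2:ℝ) ≤ (maxDeg H : ℝ) := by exact_mod_cast hΔ2
    rcases eq_or_lt_of_le hv3 with h3 | h4
    · have hv' : H'.verts.ncard = 3 := h3.symm
      have hedge : H'.edgeSet.ncard ≤ 3 := by
        simpa [hv'] using subgraph_edge_le H'
      rcases Nat.lt_or_ge H'.edgeSet.ncard 3 with hlt | hge
      · have he2 : (H'.edgeSet.ncard : ℝ) ≤ 2 := by
          exact_mod_cast Nat.lt_succ_iff.mp hlt
        rw [hv']
        push_cast
        nlinarith
      · obtain ⟨a, b, c, h1, h2, h3'⟩ := triangle_of H' hv' hge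
        have hΔ3 : (3:ℝ) ≤ (maxDeg H : ℝ) := by
          exact_mod_cast triangle_deg hconn hK3 h1 h2 h3'
        have he3 : (H'.edgeSet.ncard : ℝ) ≤ 3 := by exact_mod_cast hedge
        rw [hv']
        push_cast
        nlinarith
    · have h4' : (4:ℝ) ≤ (H'.verts.ncard : ℝ) := by exact_mod_cast h4
      have hc' : 2 * (H'.edgeSet.ncard : ℝ) ≤ (H'.verts.ncard : ℝ) * (maxDeg H : ℝ) := by
        exact_mod_cast subgraph_count H'
      nlinarith [mul_nonneg (by linarith : (0:ℝ) ≤ (maxDeg H : ℝ) - 1)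
        (by linarith : (0:ℝ) ≤ (H'.verts.ncard : ℝ) - 4)]
  have hne : Set.Nonempty {x | ∃ H' : H.Subgraph, 3 ≤ H'.verts.ncard ∧
      x = ((H'.edgeSet.ncard : ℝ) - 1) / ((H'.verts.ncard : ℝ) - 2)} := by
    refine ⟨_, ⟨(⊤ : H.Subgraph), ?_, rfl⟩⟩
    rwa [SimpleGraph.Subgraph.verts_top, Set.ncard_univ, Nat.card_eq_fintype_card]
  have hle : m2 H ≤ (maxDeg H : ℝ) - 1/2 := csSup_le hne hbound
  linarith
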